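/- Work in the Clifford algebra Cl(4,1) of ℝ⁵ with the quadratic form Q(x) = x₁² + x₂² + x₃² + x₄² − x₅², with canonical embedding ι : ℝ⁵ → Cl(4,1). Embed ℝ³ into ℝ⁵ as the first three coordinates, set e = e₄, ē = e₅, n = e + ē, n̄ = e − ē, fix a real number λ ≠ 0, and define the conformal embedding F(x) = |x|²·ι(n) + 2λ·ι(x) − λ²·ι(n̄) for x ∈ ℝ³. Then for every unit vector x ∈ ℝ³ (|x| = 1) and every y ∈ ℝ³, one has −ι(x)·F(y)·ι(x) = F(y − 2⟨x,y⟩x); that is, conjugation by ι(x) implements the Euclidean reflection in the hyperplane orthogonal to x on conformal representatives. -/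
import Mathlib


noncomputable section

/-- The quadratic form of signature `(4,1)` on ℝ⁵:
`Q(x) = x₁² + x₂² + x₃² + x₄² − x₅²`. -/
def Q41 : QuadraticForm ℝ (Fin 5 → ℝ) :=
  QuadraticMap.weightedSumSquares ℝ (![1, 1, 1, 1, -1] : Fin 5 → ℝ)

/-- The conformal Clifford algebra `Cl(4,1)`. -/
abbrev Cl41 : Type := CliffordAlgebra Q41

/-- The canonical embedding `ι : ℝ⁵ → Cl(4,1)`, satisfying `ι(v)² = Q(v)·1`. -/
def ι41 : (Fin 5 → ℝ) →ₗ[ℝ] Cl41 := CliffordAlgebra.ι Q41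

/-- The embedding of ℝ³ into ℝ⁵ as the first three coordinates. -/
def emb3 (x : Fin 3 → ℝ) : Fin 5 → ℝ := ![x 0, x 1, x 2, 0, 0]

/-- The null vector `n = e₄ + e₅`. -/
def nVec : Fin 5 → ℝ := ![0, 0, 0, 1, 1]

/-- The null vector `n̄ = e₄ − e₅`. -/
def nBar : Fin 5 → ℝ := ![0, 0, 0, 1, -1]

/-- The conformal embedding `F(x) = |x|²·ι(n) + 2λ·ι(x) − λ²·ι(n̄)` of ℝ³
into the null cone of `Cl(4,1)`, for a fixed scale `lam = λ`. -/
def confF (lam : ℝ) (x : Fin 3 → ℝ) : Cl41 :=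
  (∑ i, x i ^ 2) • ι41 nVec + (2 * lam) • ι41 (emb3 x) - lam ^ 2 • ι41 nBar

lemma polar_Q41 (u v : Fin 5 → ℝ) :
    QuadraticMap.polar Q41 u v =
      2 * (u 0 * v 0 + u 1 * v 1 + u 2 * v 2 + u 3 * v 3 - u 4 * v 4) := by
  simp [Q41, QuadraticMap.polar, QuadraticMap.weightedSumSquares_apply, Fin.sum_univ_five]
  ring

lemma ι_mul_ι (u v : Fin 5 → ℝ) :
    ι41 u * ι41 v = algebraMap ℝ Cl41 (QuadraticMap.polar Q41 u v) - ι41 v * ι41 u := by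
  have := CliffordAlgebra.ι_mul_ι_add_swap (Q := Q41) u v
  simp only [ι41]
  linear_combination (norm := abel) this

lemma reflect (x v : Fin 5 → ℝ) (hx : Q41 x = 1) :
    ι41 x * ι41 v * ι41 x = QuadraticMap.polar Q41 x v • ι41 x - ι41 v := by
  have hsq : ι41 x * ι41 x = 1 := by
    simp [ι41, CliffordAlgebra.ι_sq_scalar, hx]
  rw [ι_mul_ι x v, sub_mul, mul_assoc, hsq, mul_one, Algebra.algebraMap_eq_smul_one,
    smul_mul_assoc, one_mul]

lemma emb3_sub_smul (y : Fin 3 → ℝ) (c : ℝ) (x : Fin 3 → ℝ) :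
    emb3 (y - c • x) = emb3 y - c • emb3 x := by
  funext i
  fin_cases i <;> simp [emb3] <;> ring

/-- In `Cl(4,1)`, for every unit vector `x ∈ ℝ³` and every `y ∈ ℝ³`,
`−ι(x)·F(y)·ι(x) = F(y − 2⟨x,y⟩x)`: conjugation by `ι(x)` implements the
Euclidean reflection in the hyperplane orthogonal to `x` on conformal
representatives. -/
theorem conformal_reflection (lam : ℝ) (hlam : lam ≠ 0)
    (x : Fin 3 → ℝ) (hx : ∑ i, x i ^ 2 = 1) (y : Fin 3 → ℝ) :
    -(ι41 (emb3 x) * confF lam y * ι41 (emb3 x))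
      = confF lam (y - (2 * ∑ i, x i * y i) • x) := by
  have hQ : Q41 (emb3 x) = 1 := by
    simp [Q41, QuadraticMap.weightedSumSquares_apply, Fin.sum_univ_five, emb3]
    simpa [Fin.sum_univ_three, sq] using hx
  set c : ℝ := 2 * ∑ i, x i * y i with hc
  have eqA : ι41 (emb3 x) * ι41 nVec * ι41 (emb3 x) = -ι41 nVec := by
    rw [reflect _ _ hQ, show QuadraticMap.polar Q41 (emb3 x) nVec = 0 by
      simp [polar_Q41, emb3, nVec]]
    simp
  have eqC : ι41 (emb3 x) * ι41 nBar * ι41 (emb3 x) = -ι41 nBar := by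
    rw [reflect _ _ hQ, show QuadraticMap.polar Q41 (emb3 x) nBar = 0 by
      simp [polar_Q41, emb3, nBar]]
    simp
  have eqB : ι41 (emb3 x) * ι41 (emb3 y) * ι41 (emb3 x)
      = c • ι41 (emb3 x) - ι41 (emb3 y) := by
    rw [reflect _ _ hQ, show QuadraticMap.polar Q41 (emb3 x) (emb3 y) = c by
      simp [polar_Q41, emb3, hc, Fin.sum_univ_three]]
  have hnorm : ∑ i, (y - c • x) i ^ 2 = ∑ i, y i ^ 2 := by
    simp only [Fin.sum_univ_three, Pi.sub_apply, Pi.smul_apply, smul_eq_mul] at hx hc ⊢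
    linear_combination c ^ 2 * hx + c * hc
  conv_lhs => rw [confF]
  rw [confF, emb3_sub_smul, hnorm, map_sub, map_smul]
  simp only [mul_add, mul_sub, add_mul, sub_mul, mul_smul_comm, smul_mul_assoc]
  rw [eqA, eqB, eqC]
  module
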